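/- Let H > 0, let η₁ < 0, and let a : (η₁, 0) → ℝ be differentiable with a(η) > 0 for all η, a(η) → ∞ as η → 0⁻, and a(η)²/a'(η) → 1/H as η → 0⁻. Then (−η)·a(η) → 1/H as η → 0⁻; that is, a(η) is asymptotic to −1/(Hη), the de Sitter scale factor in conformal time. -/

import Mathlib

open Real Filter Topology

/-- If `a(η) → ∞` and `a²/a' → 1/H` as `η → 0⁻`, then `(−η)·a(η) → 1/H`,
i.e. `a` is asymptotic to the de Sitter scale factor `−1/(Hη)` in conformal time. -/
theorem stmt_5 (H η₁ : ℝ) (hH : 0 < H) (hη₁ : η₁ < 0)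
    (a : ℝ → ℝ)
    (ha_diff : ∀ η ∈ Set.Ioo η₁ (0:ℝ), DifferentiableAt ℝ a η)
    (ha_pos : ∀ η ∈ Set.Ioo η₁ (0:ℝ), 0 < a η)
    (ha_inf : Tendsto a (nhdsWithin 0 (Set.Iio 0)) atTop)
    (hlim : Tendsto (fun η => (a η) ^ 2 / deriv a η)
      (nhdsWithin 0 (Set.Iio 0)) (nhds (1 / H))) :
    Tendsto (fun η => (-η) * a η) (nhdsWithin 0 (Set.Iio 0)) (nhds (1 / H)) := by
  have hmem : ∀ᶠ η in 𝓝[<] (0:ℝ), η ∈ Set.Ioo η₁ 0 := by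
    rw [eventually_nhdsWithin_iff]
    filter_upwards [eventually_gt_nhds hη₁] with η h1 h2
    exact ⟨h1, h2⟩
  have hne : ∀ᶠ η in 𝓝[<] (0:ℝ), deriv a η ≠ 0 := by
    have h0 : (1:ℝ)/H ≠ 0 := by positivity
    filter_upwards [hlim.eventually_ne h0] with η h
    intro hd
    apply h
    simp [hd]
  set f : ℝ → ℝ := fun η => -η with hf
  set g : ℝ → ℝ := fun η => (a η)⁻¹ with hg
  have hdf : ∀ᶠ η in 𝓝[<] (0:ℝ), DifferentiableAt ℝ f η :=
    Eventually.of_forall fun η => (differentiable_neg η)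
  have hdg : ∀ᶠ η in 𝓝[<] (0:ℝ), deriv g η = -deriv a η / (a η)^2 := by
    filter_upwards [hmem] with η h
    exact deriv_inv'' (ha_diff η h) (ha_pos η h).ne'
  have hg' : ∀ᶠ η in 𝓝[<] (0:ℝ), deriv g η ≠ 0 := by
    filter_upwards [hdg, hne, hmem] with η h1 h2 h3
    rw [h1]
    exact div_ne_zero (neg_ne_zero.mpr h2) (pow_ne_zero 2 (ha_pos η h3).ne')
  have hfa : Tendsto f (𝓝[<] (0:ℝ)) (𝓝 0) := by
    have : Tendsto (fun η : ℝ => -η) (𝓝 (0:ℝ)) (𝓝 (-0)) := tendsto_neg _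
    simpa using this.mono_left nhdsWithin_le_nhds
  have hga : Tendsto g (𝓝[<] (0:ℝ)) (𝓝 0) := ha_inf.inv_tendsto_atTop
  have hdiv : Tendsto (fun η => deriv f η / deriv g η) (𝓝[<] (0:ℝ)) (𝓝 (1/H)) := by
    apply hlim.congr'
    filter_upwards [hdg, hne, hmem] with η h1 h2 h3
    have hd : deriv f η = -1 := by
      simp [hf]
    rw [hd, h1]
    have hap : a η ≠ 0 := (ha_pos η h3).ne'
    field_simp
  have key : Tendsto (fun η => f η / g η) (𝓝[<] (0:ℝ)) (𝓝 (1/H)) :=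
    deriv.lhopital_zero_nhdsLT hdf hg' hfa hga hdiv
  apply key.congr'
  filter_upwards [hmem] with η h
  simp [hf, hg, div_eq_mul_inv, mul_comm]
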